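/- Let A : X → Y and B, C : Y → X satisfy A(BA)² = ABACA = ACABA = (AC)²A. For each n ∈ ℕ, the linear map Ψ from N((BA−I)^{n+1})/N((BA−I)^n) to N((AC−I)^{n+1})/N((AC−I)^n) induced by x ↦ ACAx is well-defined and injective. -/

import Mathlib

open Polynomial ContinuousLinearMap

variable {X Y : Type*} [NormedAddCommGroup X] [NormedSpace ℂ X] [CompleteSpace X]
  [NormedAddCommGroup Y] [NormedSpace ℂ Y] [CompleteSpace Y]
theorem stmt6 (A : X →L[ℂ] Y) (B C : Y →L[ℂ] X)
    (h1 : A ∘L B ∘L A ∘L B ∘L A = A ∘L B ∘L A ∘L C ∘L A)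
    (h2 : A ∘L B ∘L A ∘L C ∘L A = A ∘L C ∘L A ∘L B ∘L A)
    (h3 : A ∘L C ∘L A ∘L B ∘L A = A ∘L C ∘L A ∘L C ∘L A) (n : ℕ) :
    ∃ Ψ : (LinearMap.ker (((B ∘L A - 1) ^ (n + 1) : X →L[ℂ] X) : X →ₗ[ℂ] X) ⧸
          (LinearMap.ker (((B ∘L A - 1) ^ n : X →L[ℂ] X) : X →ₗ[ℂ] X)).comap
            (LinearMap.ker (((B ∘L A - 1) ^ (n + 1) : X →L[ℂ] X) : X →ₗ[ℂ] X)).subtype) →ₗ[ℂ]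
        (LinearMap.ker (((A ∘L C - 1) ^ (n + 1) : Y →L[ℂ] Y) : Y →ₗ[ℂ] Y) ⧸
          (LinearMap.ker (((A ∘L C - 1) ^ n : Y →L[ℂ] Y) : Y →ₗ[ℂ] Y)).comap
            (LinearMap.ker (((A ∘L C - 1) ^ (n + 1) : Y →L[ℂ] Y) : Y →ₗ[ℂ] Y)).subtype),
      Function.Injective Ψ ∧
      ∀ (x : LinearMap.ker (((B ∘L A - 1) ^ (n + 1) : X →L[ℂ] X) : X →ₗ[ℂ] X))
        (hx : (A ∘L C ∘L A) (x : X) ∈ LinearMap.ker (((A ∘L C - 1) ^ (n + 1) : Y →L[ℂ] Y) : Y →ₗ[ℂ] Y)),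
        Ψ (Submodule.Quotient.mk x) =
          Submodule.Quotient.mk ⟨(A ∘L C ∘L A) (x : X), hx⟩ := by
  set T : X →L[ℂ] X := B ∘L A with hT
  set S : Y →L[ℂ] Y := A ∘L C with hS
  -- pointwise commutation: S (ACA x) = ACA (T x)
  have hcomm0 : ∀ x : X, S ((A ∘L C ∘L A) x) = (A ∘L C ∘L A) (T x) := by
    intro x
    have := congrArg (fun f : X →L[ℂ] Y => f x) h3
    simp only [comp_apply] at this ⊢
    exact this.symm
  have hcomm1 : ∀ x : X, (S - 1) ((A ∘L C ∘L A) x) = (A ∘L C ∘L A) ((T - 1) x) := by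
    intro x
    simp only [sub_apply, one_apply_eq_self, map_sub, hcomm0]
  have hcomm : ∀ (k : ℕ) (x : X),
      ((S - 1) ^ k) ((A ∘L C ∘L A) x) = (A ∘L C ∘L A) (((T - 1) ^ k) x) := by
    intro k
    induction k with
    | zero => intro x; simp
    | succ k ih =>
      intro x
      rw [pow_succ, mul_apply_eq_comp, hcomm1, ih, ← mul_apply_eq_comp, ← pow_succ]
  have mem1 : ∀ x : LinearMap.ker (((T - 1) ^ (n + 1) : X →L[ℂ] X) : X →ₗ[ℂ] X),
      (A ∘L C ∘L A) (x : X) ∈ LinearMap.ker (((S - 1) ^ (n + 1) : Y →L[ℂ] Y) : Y →ₗ[ℂ] Y) := by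
    intro x
    have hx := x.2
    simp only [LinearMap.mem_ker, ContinuousLinearMap.coe_coe] at hx ⊢
    rw [hcomm, hx, map_zero]
  set f : LinearMap.ker (((T - 1) ^ (n + 1) : X →L[ℂ] X) : X →ₗ[ℂ] X) →ₗ[ℂ] LinearMap.ker (((S - 1) ^ (n + 1) : Y →L[ℂ] Y) : Y →ₗ[ℂ] Y) :=
    { toFun := fun x => ⟨(A ∘L C ∘L A) (x : X), mem1 x⟩
      map_add' := fun x y => Subtype.ext
        (by simp only [Submodule.coe_add, map_add])
      map_smul' := fun c x => Subtype.ext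
        (by simp only [SetLike.val_smul, map_smul, RingHom.id_apply]) } with hf
  have hle : (LinearMap.ker (((T - 1) ^ n : X →L[ℂ] X) : X →ₗ[ℂ] X)).comap
        (LinearMap.ker (((T - 1) ^ (n + 1) : X →L[ℂ] X) : X →ₗ[ℂ] X)).subtype ≤
      ((LinearMap.ker (((S - 1) ^ n : Y →L[ℂ] Y) : Y →ₗ[ℂ] Y)).comap
        (LinearMap.ker (((S - 1) ^ (n + 1) : Y →L[ℂ] Y) : Y →ₗ[ℂ] Y)).subtype).comap f := by
    intro x hx
    simp only [Submodule.mem_comap, Submodule.subtype_apply, LinearMap.mem_ker,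
      ContinuousLinearMap.coe_coe, hf, LinearMap.coe_mk, AddHom.coe_mk] at hx ⊢
    rw [hcomm, hx, map_zero]
  refine ⟨Submodule.mapQ _ _ f hle, ?_, ?_⟩
  · rw [← LinearMap.ker_eq_bot, LinearMap.ker_eq_bot']
    intro a ha
    obtain ⟨x, rfl⟩ := Submodule.Quotient.mk_surjective _ a
    rw [Submodule.mapQ_apply] at ha
    rw [Submodule.Quotient.mk_eq_zero] at ha ⊢
    simp only [Submodule.mem_comap, Submodule.subtype_apply, LinearMap.mem_ker,
      ContinuousLinearMap.coe_coe, hf, LinearMap.coe_mk, AddHom.coe_mk] at ha ⊢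
    -- y := (T-1)^n x
    set y : X := ((T - 1) ^ n) (x : X) with hy
    rw [hcomm] at ha
    -- (T-1) y = 0
    have hTy : (T - 1) y = 0 := by
      have hx := x.2
      simp only [LinearMap.mem_ker, ContinuousLinearMap.coe_coe] at hx
      rw [hy, ← mul_apply_eq_comp, ← pow_succ', hx]
    have hTyy : T y = y := by
      have := hTy
      simp only [sub_apply, one_apply_eq_self, sub_eq_zero] at this
      exact this
    -- ABABA y = 0
    have h5 : (A ∘L B ∘L A ∘L B ∘L A) y = 0 := by
      rw [h1]
      simp only [comp_apply]
      simp only [comp_apply] at ha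
      rw [ha, map_zero, map_zero]
    -- y = T^3 y = B(ABABA y) = 0
    have hy0 : y = 0 := by
      have : T (T (T y)) = B ((A ∘L B ∘L A ∘L B ∘L A) y) := by
        simp only [hT, comp_apply]
      rw [hTyy, hTyy, hTyy, h5, map_zero] at this
      exact this
    exact hy0
  · intro x hx
    rw [Submodule.mapQ_apply]
    congr 1
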